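/- Let A ∈ R^{m×n} with m ≤ n have full row rank, and let P = (A Aᵀ)^{-1/2} A. Then P is the closest matrix with orthonormal rows to A in Frobenius norm: for every Q ∈ R^{m×n} with Q Qᵀ = I_m, ‖A − P‖_F ≤ ‖A − Q‖_F. -/

import Mathlib

open Matrix

open Classical in
/-- The unique positive semidefinite square root of a positive semidefinite matrix
(junk value `0` if `A` is not positive semidefinite). -/
noncomputable def matSqrt {m : ℕ} (A : Matrix (Fin m) (Fin m) ℝ) : Matrix (Fin m) (Fin m) ℝ :=
  if h : A.PosSemidef then
    h.1.eigenvectorUnitary.1 * diagonal (fun i => Real.sqrt (h.1.eigenvalues i)) *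
      (star h.1.eigenvectorUnitary : Matrix (Fin m) (Fin m) ℝ) else 0

/-- The GradWhitening operator `A ↦ (A Aᵀ)^{-1/2} A`. -/
noncomputable def whiten {m n : ℕ} (A : Matrix (Fin m) (Fin n) ℝ) : Matrix (Fin m) (Fin n) ℝ :=
  (matSqrt (A * Aᵀ))⁻¹ * A

/-- The Schatten 1-norm (sum of singular values): `‖A‖₁ = Tr((A Aᵀ)^{1/2})`. -/
noncomputable def schattenOne {m n : ℕ} (A : Matrix (Fin m) (Fin n) ℝ) : ℝ :=
  (matSqrt (A * Aᵀ)).trace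

/-- The quadratic loss `L(W) = (1/2) * Tr(Wᵀ H W)`. -/
noncomputable def loss {m n : ℕ} (H : Matrix (Fin m) (Fin m) ℝ)
    (W : Matrix (Fin m) (Fin n) ℝ) : ℝ :=
  (1 / 2) * (Wᵀ * H * W).trace

/-- The Frobenius norm of a real matrix. -/
noncomputable def frobNorm {m n : ℕ} (A : Matrix (Fin m) (Fin n) ℝ) : ℝ :=
  Real.sqrt (∑ i, ∑ j, (A i j) ^ 2)

namespace Matrix.PosSemidef

noncomputable def sqrt {m : ℕ} {A : Matrix (Fin m) (Fin m) ℝ} (h : A.PosSemidef) :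
    Matrix (Fin m) (Fin m) ℝ :=
  h.1.eigenvectorUnitary.1 * diagonal (fun i => Real.sqrt (h.1.eigenvalues i)) *
    (star h.1.eigenvectorUnitary : Matrix (Fin m) (Fin m) ℝ)

lemma posSemidef_sqrt {m : ℕ} {A : Matrix (Fin m) (Fin m) ℝ} (h : A.PosSemidef) :
    h.sqrt.PosSemidef := by
  have hD : (diagonal (fun i => Real.sqrt (h.1.eigenvalues i))).PosSemidef :=
    posSemidef_diagonal_iff.mpr (fun i => Real.sqrt_nonneg _)
  exact hD.mul_mul_conjTranspose_same h.1.eigenvectorUnitary.1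

lemma sqrt_mul_self {m : ℕ} {A : Matrix (Fin m) (Fin m) ℝ} (h : A.PosSemidef) :
    h.sqrt * h.sqrt = A := by
  have hU : (star h.1.eigenvectorUnitary : Matrix (Fin m) (Fin m) ℝ) *
      h.1.eigenvectorUnitary.1 = 1 := Unitary.coe_star_mul_self _
  have hsp := h.1.spectral_theorem
  rw [Unitary.conjStarAlgAut_apply] at hsp
  conv_rhs => rw [hsp]
  simp only [sqrt]
  simp only [Matrix.mul_assoc]
  rw [← Matrix.mul_assoc (star (h.1.eigenvectorUnitary : Matrix (Fin m) (Fin m) ℝ)), hU,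
    Matrix.one_mul, ← Matrix.mul_assoc (diagonal _), diagonal_mul_diagonal]
  congr 3
  funext i
  simp [Real.mul_self_sqrt (h.eigenvalues_nonneg i)]

end Matrix.PosSemidef

section aux

variable {m n : ℕ}

private lemma aux_sum_sq_eq_trace (X : Matrix (Fin m) (Fin n) ℝ) :
    (∑ i, ∑ j, (X i j) ^ 2) = (X * Xᵀ).trace := by
  simp [Matrix.trace, Matrix.mul_apply, Matrix.diag, sq]

private lemma aux_trace_mul_transpose (X Y : Matrix (Fin m) (Fin n) ℝ) :
    (X * Yᵀ).trace = ∑ i, ∑ j, X i j * Y i j := by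
  simp [Matrix.trace, Matrix.mul_apply, Matrix.diag]

private lemma aux_isUnit_det_of_rank (B : Matrix (Fin m) (Fin m) ℝ) (h : B.rank = m) :
    IsUnit B.det := by
  rw [isUnit_iff_ne_zero]
  intro hdet
  obtain ⟨v, hv, hBv⟩ := (Matrix.exists_mulVec_eq_zero_iff).2 hdet
  have hker : v ∈ LinearMap.ker B.mulVecLin := by simpa [Matrix.mulVecLin_apply] using hBv
  have hrn := LinearMap.finrank_range_add_finrank_ker B.mulVecLin
  have hfr : Module.finrank ℝ (Fin m → ℝ) = m := by simp
  rw [hfr] at hrn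
  have hrank' : Module.finrank ℝ (LinearMap.range B.mulVecLin) = m := h
  have hker0 : Module.finrank ℝ (LinearMap.ker B.mulVecLin) = 0 := by omega
  rw [Submodule.finrank_eq_zero] at hker0
  rw [hker0] at hker
  exact hv (by simpa using hker)

private lemma aux_key (S : Matrix (Fin m) (Fin m) ℝ) (hS : S.PosSemidef)
    (P Q : Matrix (Fin m) (Fin n) ℝ) (hP : P * Pᵀ = 1) (hQ : Q * Qᵀ = 1) :
    (S * P * Qᵀ).trace ≤ S.trace := by
  set R := hS.sqrt with hRdef
  have hR : R.PosSemidef := hS.posSemidef_sqrt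
  have hRR : R * R = S := hS.sqrt_mul_self
  have hRt : Rᵀ = R := hR.isHermitian
  set X := R * P with hXdef
  set Y := R * Q with hYdef
  have hXX : X * Xᵀ = S := by
    rw [hXdef, Matrix.transpose_mul, hRt, ← Matrix.mul_assoc, Matrix.mul_assoc R P Pᵀ, hP,
      Matrix.mul_one, hRR]
  have hYY : Y * Yᵀ = S := by
    rw [hYdef, Matrix.transpose_mul, hRt, ← Matrix.mul_assoc, Matrix.mul_assoc R Q Qᵀ, hQ,
      Matrix.mul_one, hRR]
  have htr : (S * P * Qᵀ).trace = (X * Yᵀ).trace := by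
    rw [← hRR, Matrix.mul_assoc, Matrix.mul_assoc, Matrix.trace_mul_comm R (R * (P * Qᵀ))]
    rw [hXdef, hYdef, Matrix.transpose_mul, hRt]
    rw [Matrix.mul_assoc, Matrix.mul_assoc, Matrix.mul_assoc]
  rw [htr, aux_trace_mul_transpose]
  have hdiagX : ∀ i, (∑ j, (X i j) ^ 2) = S i i := by
    intro i
    have := congrFun (congrFun hXX i) i
    simpa [Matrix.mul_apply, sq] using this
  have hdiagY : ∀ i, (∑ j, (Y i j) ^ 2) = S i i := by
    intro i
    have := congrFun (congrFun hYY i) i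
    simpa [Matrix.mul_apply, sq] using this
  have hbound : ∀ i, (∑ j, X i j * Y i j) ≤ S i i := by
    intro i
    have hC := Real.sum_mul_le_sqrt_mul_sqrt Finset.univ (fun j => X i j) (fun j => Y i j)
    rw [hdiagX i, hdiagY i] at hC
    have hSnn : 0 ≤ S i i := by
      rw [← hdiagX i]; positivity
    calc (∑ j, X i j * Y i j) ≤ Real.sqrt (S i i) * Real.sqrt (S i i) := hC
      _ = S i i := Real.mul_self_sqrt hSnn
  calc (∑ i, ∑ j, X i j * Y i j) ≤ ∑ i, S i i := Finset.sum_le_sum fun i _ => hbound i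
    _ = S.trace := rfl

end aux
/-- The whitening `P = (A Aᵀ)^{-1/2} A` of a full-row-rank matrix `A` is the closest matrix
with orthonormal rows to `A` in Frobenius norm. -/
theorem whiten_closest_orthonormal {m n : ℕ} (hmn : m ≤ n)
    (A : Matrix (Fin m) (Fin n) ℝ) (hrank : A.rank = m) :
    ∀ Q : Matrix (Fin m) (Fin n) ℝ, Q * Qᵀ = 1 →
      frobNorm (A - whiten A) ≤ frobNorm (A - Q) := by
  intro Q hQ
  have hPSD : (A * Aᵀ).PosSemidef := by
    have := Matrix.posSemidef_self_mul_conjTranspose A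
    simpa using this
  set S := matSqrt (A * Aᵀ) with hSdef
  have hSeq : S = hPSD.sqrt := by
    rw [hSdef, matSqrt, dif_pos hPSD]
    rfl
  have hS : S.PosSemidef := hSeq ▸ hPSD.posSemidef_sqrt
  have hSS : S * S = A * Aᵀ := hSeq ▸ hPSD.sqrt_mul_self
  have hSt : Sᵀ = S := hS.isHermitian
  -- S is invertible
  have hdetAAt : IsUnit (A * Aᵀ).det :=
    aux_isUnit_det_of_rank _ (by rw [Matrix.rank_self_mul_transpose, hrank])
  have hdetS : IsUnit S.det := by
    have : S.det * S.det = (A * Aᵀ).det := by rw [← Matrix.det_mul, hSS]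
    exact isUnit_of_mul_isUnit_left (this ▸ hdetAAt)
  have hSinv : S * S⁻¹ = 1 := Matrix.mul_nonsing_inv S hdetS
  have hSinv' : S⁻¹ * S = 1 := Matrix.nonsing_inv_mul S hdetS
  have hSinvT : S⁻¹ᵀ = S⁻¹ := by rw [Matrix.transpose_nonsing_inv, hSt]
  set P := whiten A with hPdef
  have hPA : P = S⁻¹ * A := rfl
  have hAP : A = S * P := by
    rw [hPA, ← Matrix.mul_assoc, hSinv, Matrix.one_mul]
  have hPPt : P * Pᵀ = 1 := by
    rw [hPA, Matrix.transpose_mul, hSinvT, ← Matrix.mul_assoc, Matrix.mul_assoc S⁻¹ A Aᵀ,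
      ← hSS, ← Matrix.mul_assoc, Matrix.mul_assoc (S⁻¹ * S) S S⁻¹, hSinv', hSinv,
      Matrix.one_mul]
  -- trace identities
  have hAPt : A * Pᵀ = S := by
    rw [hPA, Matrix.transpose_mul, hSinvT, ← Matrix.mul_assoc, ← hSS, Matrix.mul_assoc, hSinv,
      Matrix.mul_one]
  have htrAP : (A * Pᵀ).trace = S.trace := by rw [hAPt]
  have htrAQ : (A * Qᵀ).trace ≤ S.trace := by
    rw [hAP, Matrix.mul_assoc, ← Matrix.mul_assoc]
    exact aux_key S hS P Q hPPt hQ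
  -- expansion of squared Frobenius norms
  have hexp : ∀ X : Matrix (Fin m) (Fin n) ℝ, X * Xᵀ = 1 →
      ((A - X) * (A - X)ᵀ).trace = (A * Aᵀ).trace - 2 * (A * Xᵀ).trace + (m : ℝ) := by
    intro X hX
    have hsymm : (X * Aᵀ).trace = (A * Xᵀ).trace := by
      rw [← Matrix.trace_transpose (X * Aᵀ), Matrix.transpose_mul, Matrix.transpose_transpose]
    rw [Matrix.transpose_sub, Matrix.sub_mul, Matrix.mul_sub, Matrix.mul_sub, hX]
    rw [Matrix.trace_sub, Matrix.trace_sub, Matrix.trace_sub, hsymm, Matrix.trace_one]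
    simp [Finset.card_univ]
    ring
  rw [frobNorm, frobNorm]
  apply Real.sqrt_le_sqrt
  rw [aux_sum_sq_eq_trace, aux_sum_sq_eq_trace, hexp P hPPt, hexp Q hQ, htrAP]
  linarith
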